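/- arXiv:math/0007051 — 3 statements merged into one kernel-verified Lean document; each statement's English description precedes it below -/
import Mathlib

section
/- Let n ≥ 1 and let Q be a nonzero homogeneous polynomial of degree s in n complex variables. Then for every integer l ≥ 0 the differential operator Q(D) maps the space P_{l+s} of homogeneous polynomials of degree l+s onto the space P_l of homogeneous polynomials of degree l; consequently Q(D) : 𝒫 → 𝒫 is surjective. -/
set_option synthInstance.maxHeartbeats 1000000
set_option maxHeartbeats 1000000
set_option linter.unusedVariables false


open MvPolynomial

/-- The iterated partial derivative `∂^α = ∏ⱼ ∂ⱼ^{α j}` acting on polynomials in `n`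
variables over `ℂ`. -/
noncomputable def pderivPow {n : ℕ} (α : Fin n →₀ ℕ) :
    Module.End ℂ (MvPolynomial (Fin n) ℂ) :=
  ((List.finRange n).map fun j =>
    ((MvPolynomial.pderiv j).toLinearMap : Module.End ℂ (MvPolynomial (Fin n) ℂ)) ^ (α j)).prod

/-- For a polynomial `Q = ∑_α c_α x^α`, the constant-coefficient differential operator
`Q(D) = ∑_α c_α D^α`, where `D_j = -i ∂/∂x_j`. -/
noncomputable def QD {n : ℕ} (Q : MvPolynomial (Fin n) ℂ) :
    Module.End ℂ (MvPolynomial (Fin n) ℂ) :=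
  ∑ α ∈ Q.support, (Q.coeff α * (-Complex.I) ^ (α.sum fun _ k => k)) • pderivPow α

namespace QDAux

variable {n : ℕ}

/-- `∂ⱼ` as an endomorphism. -/
noncomputable def pd (j : Fin n) : Module.End ℂ (MvPolynomial (Fin n) ℂ) :=
  (MvPolynomial.pderiv j).toLinearMap

/-- `Dⱼ = -i ∂ⱼ`. -/
noncomputable def Dop (j : Fin n) : Module.End ℂ (MvPolynomial (Fin n) ℂ) :=
  (-Complex.I) • pd j

lemma pderiv_comm (i j : Fin n) (p : MvPolynomial (Fin n) ℂ) :
    pderiv i (pderiv j p) = pderiv j (pderiv i p) := by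
  induction p using MvPolynomial.induction_on' with
  | monomial β c =>
      rcases eq_or_ne i j with rfl | hij
      · rfl
      · simp only [pderiv_monomial]
        rw [Finsupp.tsub_apply, Finsupp.tsub_apply,
          Finsupp.single_apply, if_neg (by exact fun h => hij h.symm),
          Finsupp.single_apply, if_neg (by exact fun h => hij.symm h.symm)]
        rw [tsub_right_comm]
        simp only [Nat.sub_zero]
        ring_nf
  | add p q hp hq => simp [hp, hq]

lemma Dop_comm (i j : Fin n) : Dop i * Dop j = Dop j * Dop i := by
  simp only [Dop, smul_mul_smul_comm]
  refine congrArg (fun T => ((-Complex.I) * (-Complex.I)) • T) ?_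
  refine LinearMap.ext fun p => ?_
  simpa [pd, Module.End.mul_apply] using pderiv_comm i j p

end QDAux

namespace QDAux

variable {n : ℕ}

noncomputable def A (n : ℕ) : Subalgebra ℂ (Module.End ℂ (MvPolynomial (Fin n) ℂ)) :=
  Algebra.adjoin ℂ (Set.range (Dop (n := n)))

noncomputable instance : CommRing (A n) :=
  { (A n).toRing with
    mul_comm := (Algebra.adjoinCommRingOfComm ℂ (by
      rintro _ ⟨i, rfl⟩ _ ⟨j, rfl⟩; exact Dop_comm i j)).mul_comm }

noncomputable def g (j : Fin n) : A n :=
  ⟨Dop j, Algebra.subset_adjoin (Set.mem_range_self j)⟩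

noncomputable def Phi : MvPolynomial (Fin n) ℂ →ₐ[ℂ] A n := aeval g

lemma list_Dop_prod (α : Fin n →₀ ℕ) (l : List (Fin n)) :
    (l.map fun j => Dop j ^ α j).prod =
      ((-Complex.I) ^ (l.map fun j => α j).sum) • (l.map fun j => pd j ^ α j).prod := by
  induction l with
  | nil => simp
  | cons j t ih =>
      simp only [List.map_cons, List.prod_cons, List.sum_cons, ih]
      rw [show Dop j ^ α j = ((-Complex.I) ^ α j) • (pd j ^ α j) by
        simp [Dop, smul_pow]]
      rw [smul_mul_smul_comm, pow_add]

lemma Phi_monomial (α : Fin n →₀ ℕ) (c : ℂ) :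
    ((Phi (monomial α c) : A n) : Module.End ℂ (MvPolynomial (Fin n) ℂ)) =
      (c * (-Complex.I) ^ (α.sum fun _ k => k)) • pderivPow α := by
  rw [Phi, aeval_monomial]
  have h1 : (α.prod fun j k => g (n := n) j ^ k) = ∏ j : Fin n, g j ^ α j := by
    refine Finset.prod_subset (Finset.subset_univ _) fun j _ hj => ?_
    simp [Finsupp.notMem_support_iff.mp hj]
  have h2 : (∏ j : Fin n, g (n := n) j ^ α j : A n) =
      ((List.finRange n).map fun j => g j ^ α j).prod := by
    rw [Fin.prod_univ_def]
  have h3 : (((List.finRange n).map fun j => g (n := n) j ^ α j).prod :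
      Module.End ℂ (MvPolynomial (Fin n) ℂ)) =
      ((List.finRange n).map fun j => Dop j ^ α j).prod := by
    rw [show ((((List.finRange n).map fun j => g (n := n) j ^ α j).prod : A n) :
        Module.End ℂ (MvPolynomial (Fin n) ℂ)) =
        ((A n).val : A n →* Module.End ℂ (MvPolynomial (Fin n) ℂ))
          (((List.finRange n).map fun j => g j ^ α j).prod) from rfl, map_list_prod]
    simp [Function.comp_def, g, List.map_map]
  have h4 : ((List.finRange n).map fun j => α j).sum = α.sum fun _ k => k := by
    rw [Finsupp.sum_fintype _ _ fun _ => rfl, Fin.sum_univ_def]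
  have h5 : ((List.finRange n).map fun j => pd (n := n) j ^ α j).prod = pderivPow α := rfl
  rw [h1, h2]
  rw [MulMemClass.coe_mul, h3, list_Dop_prod, h4, h5]
  rw [Subalgebra.coe_algebraMap, Algebra.algebraMap_eq_smul_one]
  rw [smul_mul_assoc, one_mul, smul_smul]

lemma QD_eq (Q : MvPolynomial (Fin n) ℂ) :
    QD Q = ((Phi Q : A n) : Module.End ℂ (MvPolynomial (Fin n) ℂ)) := by
  conv_rhs => rw [Q.as_sum, map_sum]
  rw [AddSubmonoidClass.coe_finset_sum]
  rw [QD]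
  exact Finset.sum_congr rfl fun α _ => (Phi_monomial α (coeff α Q)).symm

end QDAux

namespace QDAux

variable {n : ℕ}

lemma nat_dF (m k : ℕ) : m.descFactorial (k + 1) = m * (m - 1).descFactorial k := by
  cases m with
  | zero => simp
  | succ m => rw [Nat.succ_descFactorial_succ]; simp

lemma pd_pow_monomial (j : Fin n) (k : ℕ) (β : Fin n →₀ ℕ) (c : ℂ) :
    (pd j ^ k) (monomial β c) =
      monomial (β - Finsupp.single j k) (c * ((β j).descFactorial k : ℂ)) := by
  induction k generalizing β c with
  | zero => simp
  | succ k ih =>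
      rw [pow_succ, Module.End.mul_apply]
      have h0 : pd (n := n) j (monomial β c) = monomial (β - Finsupp.single j 1) (c * (β j)) := by
        simp [pd, pderiv_monomial]
      rw [h0, ih]
      have hβ : (β - Finsupp.single j 1 : Fin n →₀ ℕ) j = β j - 1 := by
        rw [Finsupp.tsub_apply, Finsupp.single_eq_same]
      rw [hβ]
      have hsub : β - Finsupp.single j 1 - Finsupp.single j k = β - Finsupp.single j (k + 1) := by
        rw [← tsub_add_eq_tsub_tsub, ← Finsupp.single_add, add_comm]
      rw [hsub, nat_dF]
      push_cast
      ring_nf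

lemma list_apply_monomial (γ β : Fin n →₀ ℕ) (c : ℂ) (l : List (Fin n)) (hl : l.Nodup) :
    ((l.map fun j => pd j ^ γ j).prod) (monomial β c) =
      monomial (β - ∑ j ∈ l.toFinset, Finsupp.single j (γ j))
        (c * ∏ j ∈ l.toFinset, ((β j).descFactorial (γ j) : ℂ)) := by
  induction l with
  | nil => simp
  | cons j t ih =>
      obtain ⟨hjt, ht⟩ := List.nodup_cons.mp hl
      rw [List.map_cons, List.prod_cons, Module.End.mul_apply, ih ht, pd_pow_monomial]
      have hjt' : j ∉ t.toFinset := fun h => hjt (List.mem_toFinset.mp h)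
      have happ : (β - ∑ i ∈ t.toFinset, Finsupp.single i (γ i)) j = β j := by
        rw [Finsupp.tsub_apply, Finset.sum_apply']
        rw [Finset.sum_eq_zero fun i hi => Finsupp.single_eq_of_ne (by rintro rfl; exact hjt' hi)]
        simp
      rw [happ, List.toFinset_cons, Finset.sum_insert hjt', Finset.prod_insert hjt']
      rw [← tsub_add_eq_tsub_tsub, add_comm]
      ring_nf

lemma pderivPow_monomial (γ β : Fin n →₀ ℕ) (c : ℂ) :
    pderivPow γ (monomial β c) =
      monomial (β - γ) (c * ∏ j : Fin n, ((β j).descFactorial (γ j) : ℂ)) := by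
  have h := list_apply_monomial γ β c (List.finRange n) (List.nodup_finRange n)
  rw [List.toFinset_finRange] at h
  have hγ : (∑ j : Fin n, Finsupp.single j (γ j)) = γ := by
    rw [← Finset.sum_subset (Finset.subset_univ γ.support)
      (fun j _ hj => by rw [Finsupp.notMem_support_iff.mp hj, Finsupp.single_zero])]
    exact Finsupp.sum_single γ
  rw [hγ] at h
  exact h

lemma coeff_zero_pderivPow (γ : Fin n →₀ ℕ) (r : MvPolynomial (Fin n) ℂ) :
    coeff 0 (pderivPow γ r) = (∏ j : Fin n, ((γ j).factorial : ℂ)) * coeff γ r := by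
  conv_lhs => rw [r.as_sum, map_sum]
  rw [coeff_sum]
  rw [Finset.sum_eq_single γ]
  · rw [pderivPow_monomial, tsub_self, coeff_monomial, if_pos rfl, mul_comm]
    congr 1
    exact Finset.prod_congr rfl fun j _ => by rw [Nat.descFactorial_self]
  · intro β _ hβγ
    rw [pderivPow_monomial, coeff_monomial]
    by_cases h0 : β - γ = 0
    · have hle : ∀ j, β j ≤ γ j := fun j => by
        have := congrArg (fun f => f j) h0
        simpa [Finsupp.tsub_apply] using Nat.sub_eq_zero_iff_le.mp (by
          simpa [Finsupp.tsub_apply] using this)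
      obtain ⟨j, hj⟩ : ∃ j, β j ≠ γ j := by
        by_contra hc
        push_neg at hc
        exact hβγ (Finsupp.ext hc)
      have hlt : β j < γ j := lt_of_le_of_ne (hle j) hj
      rw [if_pos (by rw [h0])]
      rw [Finset.prod_eq_zero (Finset.mem_univ j)
        (by rw [Nat.descFactorial_eq_zero_iff_lt.mpr hlt]; simp)]
      ring
    · rw [if_neg (by exact fun h => h0 (by rw [h]))]
  · intro hγ
    rw [MvPolynomial.notMem_support_iff.mp hγ]
    simp

end QDAux

namespace QDAux

variable {n : ℕ}

lemma degree_single' (j : Fin n) (k : ℕ) : (Finsupp.single j k).degree = k := by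
  rcases eq_or_ne k 0 with rfl | hk
  · simp [Finsupp.degree]
  · exact Finsupp.degree_single j k

lemma degree_split {β : Fin n →₀ ℕ} {j : Fin n} (h : β j ≠ 0) :
    β.degree = (β - Finsupp.single j 1).degree + 1 := by
  have hle : Finsupp.single j 1 ≤ β := Finsupp.single_le_iff.mpr (Nat.one_le_iff_ne_zero.mpr h)
  have hsum : (β - Finsupp.single j 1) + Finsupp.single j 1 = β := tsub_add_cancel_of_le hle
  have hw : ∀ f : Fin n →₀ ℕ, f.degree = Finsupp.weight 1 f := fun f =>
    congrFun (congrArg DFunLike.coe Finsupp.degree_eq_weight_one) f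
  conv_lhs => rw [hw β, ← hsum, map_add]
  rw [← hw, ← hw, degree_single' j 1]

lemma pderiv_isHomog (j : Fin n) {m : ℕ} {p : MvPolynomial (Fin n) ℂ}
    (hp : p.IsHomogeneous (m + 1)) : (pderiv j p).IsHomogeneous m := by
  rw [p.as_sum, map_sum]
  apply MvPolynomial.IsHomogeneous.sum
  intro β hβ
  rw [pderiv_monomial]
  rcases eq_or_ne (β j) 0 with h0 | h0
  · rw [h0]
    simp only [Nat.cast_zero, mul_zero, monomial_zero]
    exact isHomogeneous_zero _ _ _
  · apply isHomogeneous_monomial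
    have hd : β.degree = m + 1 := by
      have := hp (MvPolynomial.mem_support_iff.mp hβ)
      rwa [Finsupp.degree_eq_weight_one]
    have := degree_split (j := j) h0
    omega

lemma pd_pow_isHomog (j : Fin n) (k : ℕ) {m : ℕ} {p : MvPolynomial (Fin n) ℂ}
    (hp : p.IsHomogeneous (m + k)) : ((pd j ^ k) p).IsHomogeneous m := by
  induction k generalizing p with
  | zero => simpa using hp
  | succ k ih =>
      rw [pow_succ, Module.End.mul_apply]
      refine ih (pderiv_isHomog j ?_)
      rwa [add_assoc]

lemma pderivPow_isHomog (γ : Fin n →₀ ℕ) {m : ℕ} {p : MvPolynomial (Fin n) ℂ}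
    (hp : p.IsHomogeneous (m + γ.degree)) : (pderivPow γ p).IsHomogeneous m := by
  have key : ∀ (l : List (Fin n)), l.Nodup →
      ∀ (m : ℕ) (p : MvPolynomial (Fin n) ℂ), p.IsHomogeneous (m + ∑ j ∈ l.toFinset, γ j) →
      (((l.map fun j => pd j ^ γ j).prod) p).IsHomogeneous m := by
    intro l
    induction l with
    | nil => intro _ m p hp; simpa using hp
    | cons j t ih =>
        intro hl m p hp
        obtain ⟨hjt, ht⟩ := List.nodup_cons.mp hl
        have hjt' : j ∉ t.toFinset := fun h => hjt (List.mem_toFinset.mp h)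
        rw [List.map_cons, List.prod_cons, Module.End.mul_apply]
        apply pd_pow_isHomog
        apply ih ht
        rw [List.toFinset_cons, Finset.sum_insert hjt'] at hp
        rwa [← add_assoc] at hp
  apply key (List.finRange n) (List.nodup_finRange n)
  rw [List.toFinset_finRange]
  have : (∑ j : Fin n, γ j) = γ.degree := by
    rw [Finsupp.degree_apply]
    exact (Finset.sum_subset (Finset.subset_univ _)
      (fun j _ hj => Finsupp.notMem_support_iff.mp hj)).symm
  rwa [this]

lemma QD_mapsTo {s : ℕ} {Q : MvPolynomial (Fin n) ℂ} (hQ : Q.IsHomogeneous s) (l : ℕ)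
    {q : MvPolynomial (Fin n) ℂ} (hq : q.IsHomogeneous (l + s)) :
    (QD Q q).IsHomogeneous l := by
  rw [QD, LinearMap.sum_apply]
  apply MvPolynomial.IsHomogeneous.sum
  intro α hα
  rw [LinearMap.smul_apply]
  have hdeg : α.degree = s := by
    have := hQ (MvPolynomial.mem_support_iff.mp hα)
    rwa [Finsupp.degree_eq_weight_one]
  have h1 : (pderivPow α q).IsHomogeneous l := pderivPow_isHomog α (by rwa [hdeg])
  exact (homogeneousSubmodule (Fin n) ℂ l).smul_mem _ h1

end QDAux

namespace QDAux

variable {n : ℕ}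

noncomputable def PhiL : MvPolynomial (Fin n) ℂ →ₗ[ℂ] Module.End ℂ (MvPolynomial (Fin n) ℂ) :=
  (A n).val.toLinearMap ∘ₗ (Phi (n := n)).toLinearMap

lemma PhiL_apply (p : MvPolynomial (Fin n) ℂ) :
    PhiL p = ((Phi p : A n) : Module.End ℂ (MvPolynomial (Fin n) ℂ)) := rfl

lemma QD_eq' (Q : MvPolynomial (Fin n) ℂ) : QD Q = PhiL Q := QD_eq Q

lemma PhiL_mul (p q : MvPolynomial (Fin n) ℂ) : PhiL (p * q) = PhiL p * PhiL q := by
  rw [PhiL_apply, PhiL_apply, PhiL_apply, map_mul, MulMemClass.coe_mul]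

noncomputable def b : MvPolynomial (Fin n) ℂ →ₗ[ℂ] MvPolynomial (Fin n) ℂ →ₗ[ℂ] ℂ where
  toFun p := lcoeff ℂ 0 ∘ₗ PhiL p
  map_add' p q := by ext r; simp [map_add]
  map_smul' c p := by ext r; simp [map_smul]

lemma b_apply (p r : MvPolynomial (Fin n) ℂ) : b p r = coeff 0 (PhiL p r) := rfl

lemma b_adjoint (p Q r : MvPolynomial (Fin n) ℂ) : b (p * Q) r = b p (QD Q r) := by
  rw [b_apply, b_apply, PhiL_mul, Module.End.mul_apply, QD_eq']

lemma b_monomial_left (γ : Fin n →₀ ℕ) (c : ℂ) (r : MvPolynomial (Fin n) ℂ) :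
    b (monomial γ c) r =
      c * (-Complex.I) ^ (γ.sum fun _ k => k) * (∏ j : Fin n, ((γ j).factorial : ℂ)) *
        coeff γ r := by
  rw [b_apply, PhiL_apply, Phi_monomial, LinearMap.smul_apply]
  rw [show coeff 0 ((c * (-Complex.I) ^ (γ.sum fun _ k => k)) • pderivPow γ r) =
    (c * (-Complex.I) ^ (γ.sum fun _ k => k)) * coeff 0 (pderivPow γ r) from coeff_smul 0 _ _]
  rw [coeff_zero_pderivPow]
  ring

lemma b_monomial_right (p : MvPolynomial (Fin n) ℂ) (α : Fin n →₀ ℕ) :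
    b p (monomial α 1) =
      coeff α p * (-Complex.I) ^ (α.sum fun _ k => k) *
        ∏ j : Fin n, ((α j).factorial : ℂ) := by
  conv_lhs => rw [p.as_sum, map_sum b, LinearMap.sum_apply]
  rw [Finset.sum_eq_single α]
  · rw [b_monomial_left, coeff_monomial, if_pos rfl]
    ring
  · intro γ _ hγα
    rw [b_monomial_left, coeff_monomial, if_neg (fun h => hγα h.symm)]
    ring
  · intro hα
    rw [MvPolynomial.notMem_support_iff.mp hα]
    simp

lemma b_factor_ne_zero (α : Fin n →₀ ℕ) :
    (-Complex.I) ^ (α.sum fun _ k => k) * (∏ j : Fin n, ((α j).factorial : ℂ)) ≠ 0 := by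
  apply mul_ne_zero
  · exact pow_ne_zero _ (neg_ne_zero.mpr Complex.I_ne_zero)
  · exact Finset.prod_ne_zero_iff.mpr fun j _ =>
      Nat.cast_ne_zero.mpr (Nat.factorial_ne_zero _)

end QDAux

namespace QDAux

variable {n : ℕ}

instance (k : ℕ) : FiniteDimensional ℂ (homogeneousSubmodule (Fin n) ℂ k) := by
  apply Submodule.finiteDimensional_of_le (S₂ := restrictTotalDegree (Fin n) ℂ k)
  intro p hp
  rw [mem_restrictTotalDegree]
  exact ((mem_homogeneousSubmodule k p).mp hp).totalDegree_le

noncomputable def beta (k : ℕ) :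
    homogeneousSubmodule (Fin n) ℂ k →ₗ[ℂ]
      Module.Dual ℂ (homogeneousSubmodule (Fin n) ℂ k) where
  toFun p := b p.1 ∘ₗ (homogeneousSubmodule (Fin n) ℂ k).subtype
  map_add' p q := by ext r; simp [map_add]
  map_smul' c p := by ext r; simp [map_smul]

lemma mem_homog_of_support {k : ℕ} {p : MvPolynomial (Fin n) ℂ} (hp : p.IsHomogeneous k)
    {α : Fin n →₀ ℕ} (hα : α ∈ p.support) :
    (monomial α (1 : ℂ)) ∈ homogeneousSubmodule (Fin n) ℂ k := by
  rw [mem_homogeneousSubmodule]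
  apply isHomogeneous_monomial
  have := hp (MvPolynomial.mem_support_iff.mp hα)
  rwa [Finsupp.degree_eq_weight_one]

/-- Key nondegeneracy: if `b p r = 0` for `r` ranging over the monomials in the support
of `p`, then `p = 0`. -/
lemma eq_zero_of_b_eq_zero {k : ℕ} {p : MvPolynomial (Fin n) ℂ} (hp : p.IsHomogeneous k)
    (h : ∀ r ∈ homogeneousSubmodule (Fin n) ℂ k, b p r = 0) : p = 0 := by
  by_contra hne
  obtain ⟨α, hα⟩ := (MvPolynomial.support_nonempty.mpr hne)
  have h1 := h (monomial α 1) (mem_homog_of_support hp hα)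
  rw [b_monomial_right, mul_assoc] at h1
  rcases mul_eq_zero.mp h1 with h2 | h2
  · exact MvPolynomial.mem_support_iff.mp hα h2
  · exact b_factor_ne_zero α h2

lemma beta_injective (k : ℕ) : Function.Injective (beta (n := n) k) := by
  rw [injective_iff_map_eq_zero]
  intro p hp
  ext1
  show p.1 = 0
  refine eq_zero_of_b_eq_zero p.2 fun r hr => ?_
  have := congrFun (congrArg DFunLike.coe hp) ⟨r, hr⟩
  simpa [beta] using this

lemma beta_surjective (k : ℕ) : Function.Surjective (beta (n := n) k) :=
  (LinearMap.injective_iff_surjective_of_finrank_eq_finrank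
    (Subspace.dual_finrank_eq).symm).mp (beta_injective k)

end QDAux

/-- If `Q ≠ 0` is homogeneous of degree `s` in `n ≥ 1` complex variables, then `Q(D)`
maps the space of homogeneous polynomials of degree `l + s` onto the space of homogeneous
polynomials of degree `l`, for every `l`; consequently `Q(D) : 𝒫 → 𝒫` is surjective. -/
theorem QD_surjective_on_homogeneous {n : ℕ} (hn : 1 ≤ n) {s : ℕ}
    (Q : MvPolynomial (Fin n) ℂ) (hQne : Q ≠ 0) (hQhom : Q.IsHomogeneous s) :
    (∀ (l : ℕ) (p : MvPolynomial (Fin n) ℂ), p.IsHomogeneous l →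
      ∃ q : MvPolynomial (Fin n) ℂ, q.IsHomogeneous (l + s) ∧ QD Q q = p) ∧
    Function.Surjective (QD Q) := by
    classical
  have main : ∀ (l : ℕ) (p : MvPolynomial (Fin n) ℂ), p.IsHomogeneous l →
      ∃ q, q.IsHomogeneous (l + s) ∧ QD Q q = p := by
    intro l p hp
    have hmap : ∀ q ∈ homogeneousSubmodule (Fin n) ℂ (l + s),
        QD Q q ∈ homogeneousSubmodule (Fin n) ℂ l := fun q hq =>
      QDAux.QD_mapsTo hQhom l hq
    let T : homogeneousSubmodule (Fin n) ℂ (l + s) →ₗ[ℂ]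
        homogeneousSubmodule (Fin n) ℂ l := (QD Q).restrict hmap
    have hTsurj : Function.Surjective T := by
      rw [← LinearMap.dualMap_injective_iff]
      rw [injective_iff_map_eq_zero]
      intro φ hφ
      obtain ⟨p0, rfl⟩ := QDAux.beta_surjective l φ
      have hzero : p0.1 * Q = 0 := by
        apply QDAux.eq_zero_of_b_eq_zero
          (((mem_homogeneousSubmodule l p0.1).mp p0.2).mul hQhom)
        intro r hr
        rw [QDAux.b_adjoint]
        have h2 : (T ⟨r, hr⟩ : MvPolynomial (Fin n) ℂ) = QD Q r := rfl
        have h3 := congrFun (congrArg DFunLike.coe hφ) ⟨r, hr⟩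
        simpa [QDAux.beta, LinearMap.dualMap_apply, h2] using h3
      have hp0 : p0 = 0 := by
        apply Subtype.ext
        rcases mul_eq_zero.mp hzero with h | h
        · exact h
        · exact absurd h hQne
      rw [hp0, map_zero]
    obtain ⟨q, hq⟩ := hTsurj ⟨p, hp⟩
    exact ⟨q.1, (mem_homogeneousSubmodule _ _).mp q.2, congrArg Subtype.val hq⟩
  refine ⟨main, fun p => ?_⟩
  choose qf hqf using fun i =>
    main i (homogeneousComponent i p) (homogeneousComponent_isHomogeneous i p)
  refine ⟨∑ i ∈ Finset.range (p.totalDegree + 1), qf i, ?_⟩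
  rw [map_sum]
  rw [Finset.sum_congr rfl fun i _ => (hqf i).2]
  exact sum_homogeneousComponent p
end

section
/- Let n ≥ 1 and let Q be a nonzero homogeneous polynomial of degree s in n complex variables. Then there exists a linear map R : 𝒫 → 𝒫 which preserves homogeneity (i.e., R maps each space P_l of homogeneous polynomials of degree l into the space P_{l+s} of homogeneous polynomials of degree l+s) and which is a right inverse of Q(D), i.e., Q(D)(R p) = p for every polynomial p ∈ 𝒫. -/
open MvPolynomial

namespace Aux

variable {n : ℕ}

noncomputable abbrev P (j : Fin n) : Module.End ℂ (MvPolynomial (Fin n) ℂ) :=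
  (pderiv j).toLinearMap

lemma P_apply (j : Fin n) (p : MvPolynomial (Fin n) ℂ) : P j p = pderiv j p := rfl

lemma descFactorial_add' (m a b : ℕ) :
    m.descFactorial (a + b) = (m - b).descFactorial a * m.descFactorial b := by
  induction a with
  | zero => simp
  | succ a ih =>
      rw [show a + 1 + b = (a + b) + 1 by omega, Nat.descFactorial_succ, ih,
        Nat.descFactorial_succ, Nat.sub_sub]
      ring

lemma pderiv_pow_monomial (j : Fin n) (k : ℕ) (β : Fin n →₀ ℕ) (c : ℂ) :
    (P j ^ k) (monomial β c) =
      monomial (β - Finsupp.single j k) (((β j).descFactorial k : ℂ) * c) := by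
  induction k with
  | zero => simp
  | succ k ih =>
      rw [pow_succ', Module.End.mul_apply, ih, P_apply, pderiv_monomial]
      rw [Finsupp.tsub_apply, Finsupp.single_apply, if_pos rfl]
      rw [show β - Finsupp.single j k - Finsupp.single j 1 = β - Finsupp.single j (k+1) by
        rw [tsub_tsub, ← Finsupp.single_add]]
      congr 1
      rw [Nat.descFactorial_succ]
      rcases le_or_gt k (β j) with h | h
      · push_cast [Nat.cast_sub h]
        ring
      · rw [Nat.descFactorial_eq_zero_iff_lt.2 h, Nat.sub_eq_zero_of_le h.le]
        simp

end Aux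

namespace Aux2
open Aux

variable {n : ℕ}

lemma list_sum_single_apply_of_not_mem (α : Fin n →₀ ℕ) (j : Fin n) :
    ∀ (L : List (Fin n)), j ∉ L →
      ((L.map fun i => Finsupp.single i (α i)).sum) j = 0 := by
  intro L
  induction L with
  | nil => simp
  | cons i L ih =>
      intro hj
      simp only [List.map_cons, List.sum_cons, Finsupp.add_apply]
      rw [ih (fun h => hj (List.mem_cons_of_mem _ h)),
        Finsupp.single_apply,
        if_neg (fun h : i = j => hj (h ▸ List.mem_cons_self))]

lemma prod_pderiv_pow_monomial (α β : Fin n →₀ ℕ) (c : ℂ) :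
    ∀ (L : List (Fin n)), L.Nodup →
    ((L.map fun j => P j ^ α j).prod) (monomial β c)
      = monomial (β - (L.map fun i => Finsupp.single i (α i)).sum)
          ((L.map fun j => ((β j).descFactorial (α j) : ℂ)).prod * c) := by
  intro L
  induction L with
  | nil => simp
  | cons j L ih =>
      intro hnd
      obtain ⟨hj, hnd'⟩ := List.nodup_cons.1 hnd
      simp only [List.map_cons, List.prod_cons, List.sum_cons, Module.End.mul_apply]
      rw [ih hnd', pderiv_pow_monomial]
      rw [Finsupp.tsub_apply, list_sum_single_apply_of_not_mem α j L hj, Nat.sub_zero]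
      rw [tsub_tsub, add_comm]
      ring_nf

end Aux2

namespace Aux3
open Aux Aux2

variable {n : ℕ}

lemma pderivPow_monomial (α β : Fin n →₀ ℕ) (c : ℂ) :
    pderivPow α (monomial β c)
      = monomial (β - α) ((↑(∏ j, (β j).descFactorial (α j)) : ℂ) * c) := by
  rw [pderivPow, prod_pderiv_pow_monomial α β c _ (List.nodup_finRange n)]
  rw [← Fin.sum_univ_def, ← Fin.prod_univ_def, Finsupp.univ_sum_single]
  push_cast
  ring_nf

end Aux3

namespace Aux4
open Aux Aux3

variable {n : ℕ}

lemma pderivPow_add (α β : Fin n →₀ ℕ) :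
    pderivPow (α + β) = pderivPow α * pderivPow β := by
  apply (MvPolynomial.basisMonomials (Fin n) ℂ).ext
  intro γ
  have hb : (MvPolynomial.basisMonomials (Fin n) ℂ) γ = monomial γ 1 :=
    congrFun (coe_basisMonomials (Fin n) ℂ) γ
  rw [hb, Module.End.mul_apply, pderivPow_monomial, pderivPow_monomial, pderivPow_monomial]
  rw [tsub_tsub, add_comm β α]
  congr 1
  have h : ∀ j : Fin n, (γ j).descFactorial ((α + β) j)
      = ((γ - β) j).descFactorial (α j) * (γ j).descFactorial (β j) := fun j => by
    rw [Finsupp.add_apply, Finsupp.tsub_apply, descFactorial_add']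
  rw [Finset.prod_congr rfl (fun j _ => h j), Finset.prod_mul_distrib]
  push_cast
  ring

end Aux4

namespace Aux5
open Aux Aux3 Aux4

variable {n : ℕ}

noncomputable def pd (p : MvPolynomial (Fin n) ℂ) : Module.End ℂ (MvPolynomial (Fin n) ℂ) :=
  ∑ α ∈ p.support, p.coeff α • pderivPow α

lemma pd_eq_sum_of_subset (p : MvPolynomial (Fin n) ℂ) {T : Finset (Fin n →₀ ℕ)}
    (hT : p.support ⊆ T) : pd p = ∑ α ∈ T, p.coeff α • pderivPow α := by
  rw [pd]
  apply Finset.sum_subset hT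
  intro α _ hα
  rw [notMem_support_iff.1 hα, zero_smul]

lemma pd_monomial (α : Fin n →₀ ℕ) (c : ℂ) :
    pd (monomial α c) = c • pderivPow α := by
  rcases eq_or_ne c 0 with rfl | hc
  · simp [pd]
  · rw [pd, support_monomial, if_neg hc, Finset.sum_singleton, coeff_monomial, if_pos rfl]

lemma pd_add (p q : MvPolynomial (Fin n) ℂ) : pd (p + q) = pd p + pd q := by
  rw [pd_eq_sum_of_subset (p + q) (Finset.Subset.trans (support_add)
        (Finset.Subset.refl _)),
      pd_eq_sum_of_subset p (Finset.subset_union_left (s₂ := q.support)),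
      pd_eq_sum_of_subset q (Finset.subset_union_right (s₁ := p.support)),
      ← Finset.sum_add_distrib]
  · apply Finset.sum_congr rfl
    intro α _
    rw [coeff_add, add_smul]

lemma pd_mul (p q : MvPolynomial (Fin n) ℂ) : pd (p * q) = pd p * pd q := by
  induction p using MvPolynomial.induction_on' with
  | add p1 p2 ih1 ih2 => rw [add_mul, pd_add, pd_add, ih1, ih2, add_mul]
  | monomial α c =>
      induction q using MvPolynomial.induction_on' with
      | add q1 q2 ih1 ih2 => rw [mul_add, pd_add, pd_add, ih1, ih2, mul_add]
      | monomial β d =>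
          rw [monomial_mul, pd_monomial, pd_monomial, pd_monomial, pderivPow_add,
            smul_mul_smul_comm]

end Aux5

namespace Aux6
open Aux Aux3 Aux4 Aux5

variable {n : ℕ}

lemma constantCoeff_pderivPow_monomial (α β : Fin n →₀ ℕ) (c : ℂ) :
    constantCoeff (pderivPow α (monomial β c))
      = if β = α then (↑(∏ j, Nat.factorial (α j)) : ℂ) * c else 0 := by
  rw [pderivPow_monomial, constantCoeff_monomial]
  by_cases h : β = α
  · subst h
    rw [if_pos (tsub_self β), if_pos rfl]
    congr 2
    exact Finset.prod_congr rfl fun j _ => Nat.descFactorial_self (β j)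
  · rw [if_neg h]
    by_cases h2 : β - α = 0
    · rw [if_pos h2]
      have hle : β ≤ α := tsub_eq_zero_iff_le.1 h2
      have : ∃ j, β j < α j := by
        by_contra hc
        push_neg at hc
        exact h (Finsupp.ext fun j => le_antisymm (hle j) (hc j))
      obtain ⟨j, hj⟩ := this
      have : (β j).descFactorial (α j) = 0 := Nat.descFactorial_eq_zero_iff_lt.2 hj
      rw [Finset.prod_eq_zero (Finset.mem_univ j) this]
      simp
    · rw [if_neg h2]

lemma constantCoeff_pderivPow (α : Fin n →₀ ℕ) (p : MvPolynomial (Fin n) ℂ)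
    (hα : α ∈ p.support) :
    constantCoeff (pderivPow α p) = (↑(∏ j, Nat.factorial (α j)) : ℂ) * p.coeff α := by
  conv_lhs => rw [p.as_sum, map_sum, map_sum]
  rw [Finset.sum_congr rfl fun β _ => constantCoeff_pderivPow_monomial α β (p.coeff β)]
  rw [Finset.sum_ite_eq' p.support α fun β => (↑(∏ j, Nat.factorial (α j)) : ℂ) * p.coeff β, if_pos hα]

lemma eq_zero_of_pd_conj_self (p : MvPolynomial (Fin n) ℂ)
    (h : pd (MvPolynomial.map (starRingEnd ℂ) p) p = 0) : p = 0 := by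
  by_contra hp
  have hsub : (MvPolynomial.map (starRingEnd ℂ) p).support ⊆ p.support :=
    MvPolynomial.support_map_subset _ _
  have h1 : constantCoeff (pd (MvPolynomial.map (starRingEnd ℂ) p) p)
      = ∑ α ∈ p.support, (starRingEnd ℂ) (p.coeff α) * ((↑(∏ j, Nat.factorial (α j)) : ℂ) * p.coeff α) := by
    rw [pd_eq_sum_of_subset _ hsub, LinearMap.sum_apply, map_sum]
    apply Finset.sum_congr rfl
    intro α hα
    rw [LinearMap.smul_apply, constantCoeff_smul, smul_eq_mul,
      constantCoeff_pderivPow α p hα, coeff_map]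
  have h2 : constantCoeff (pd (MvPolynomial.map (starRingEnd ℂ) p) p)
      = ((∑ α ∈ p.support, (↑(∏ j, Nat.factorial (α j)) : ℝ) * Complex.normSq (p.coeff α) : ℝ) : ℂ) := by
    rw [h1]
    push_cast
    apply Finset.sum_congr rfl
    intro α _
    rw [Complex.normSq_eq_conj_mul_self (z := coeff α p)]
    ring
  have h3 : (0:ℝ) < ∑ α ∈ p.support, (↑(∏ j, Nat.factorial (α j)) : ℝ) * Complex.normSq (p.coeff α) := by
    obtain ⟨α, hα⟩ := Finset.nonempty_iff_ne_empty.2 (fun he => hp (support_eq_empty.1 he))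
    apply Finset.sum_pos'
    · intro β _
      exact mul_nonneg (by positivity) (Complex.normSq_nonneg _)
    · refine ⟨α, hα, ?_⟩
      have hc : p.coeff α ≠ 0 := mem_support_iff.1 hα
      have : 0 < Complex.normSq (p.coeff α) := by
        simpa [Complex.normSq_pos] using hc
      have hf : (0:ℝ) < (↑(∏ j, Nat.factorial (α j)) : ℝ) := by positivity
      exact mul_pos hf this
  rw [h, map_zero] at h2
  have h4 : (∑ α ∈ p.support, (↑(∏ j, Nat.factorial (α j)) : ℝ) * Complex.normSq (p.coeff α))
      = 0 := by exact_mod_cast h2.symm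
  linarith

end Aux6

namespace Aux7
open Aux Aux3 Aux4 Aux5 Aux6

variable {n : ℕ}

lemma degree_tsub_of_le {α β : Fin n →₀ ℕ} (h : α ≤ β) :
    (β - α).degree + α.degree = β.degree := by
  simp only [Finsupp.degree_eq_weight_one]
  rw [← map_add, tsub_add_cancel_of_le h]

lemma pderivPow_isHomogeneous {s l : ℕ} (α : Fin n →₀ ℕ) (hαs : α.degree = s)
    (p : MvPolynomial (Fin n) ℂ) (hp : p.IsHomogeneous (l + s)) :
    (pderivPow α p).IsHomogeneous l := by
  rw [p.as_sum, map_sum]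
  apply IsHomogeneous.sum
  intro β hβ
  rw [pderivPow_monomial]
  by_cases hle : α ≤ β
  · apply isHomogeneous_monomial
    have hβdeg : β.degree = l + s := by
      rw [Finsupp.degree_eq_weight_one]
      exact hp (mem_support_iff.1 hβ)
    have := degree_tsub_of_le hle
    omega
  · have : ∃ j, β j < α j := by
      by_contra hc
      push_neg at hc
      exact hle fun j => hc j
    obtain ⟨j, hj⟩ := this
    have hz : (β j).descFactorial (α j) = 0 := Nat.descFactorial_eq_zero_iff_lt.2 hj
    rw [Finset.prod_eq_zero (Finset.mem_univ j) hz]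
    push_cast
    rw [zero_mul, map_zero]
    exact isHomogeneous_zero _ _ _

lemma pd_isHomogeneous {s l : ℕ} (Q : MvPolynomial (Fin n) ℂ) (hQ : Q.IsHomogeneous s)
    (p : MvPolynomial (Fin n) ℂ) (hp : p.IsHomogeneous (l + s)) :
    (pd Q p).IsHomogeneous l := by
  rw [pd, LinearMap.sum_apply]
  apply IsHomogeneous.sum
  intro α hα
  rw [LinearMap.smul_apply]
  have hdeg : α.degree = s := by
    rw [Finsupp.degree_eq_weight_one]
    exact hQ (mem_support_iff.1 hα)
  exact (homogeneousSubmodule (Fin n) ℂ l).smul_mem _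
    (pderivPow_isHomogeneous α hdeg p hp)

lemma QD_eq_smul_pd {s : ℕ} (Q : MvPolynomial (Fin n) ℂ) (hQ : Q.IsHomogeneous s) :
    QD Q = ((-Complex.I) ^ s) • pd Q := by
  rw [QD, pd, Finset.smul_sum]
  apply Finset.sum_congr rfl
  intro α hα
  have hdeg : (α.sum fun _ k => k) = s := by
    have : α.degree = s := by
      rw [Finsupp.degree_eq_weight_one]
      exact hQ (mem_support_iff.1 hα)
    exact this
  rw [hdeg, smul_smul, mul_comm]

end Aux7

namespace Aux8
open Aux Aux3 Aux4 Aux5 Aux6 Aux7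

variable {n : ℕ}

lemma conj_conj_poly (p : MvPolynomial (Fin n) ℂ) :
    MvPolynomial.map (starRingEnd ℂ) (MvPolynomial.map (starRingEnd ℂ) p) = p := by
  rw [MvPolynomial.map_map,
    show (starRingEnd ℂ).comp (starRingEnd ℂ) = RingHom.id ℂ from
      RingHom.ext fun z => Complex.conj_conj z, MvPolynomial.map_id]

instance fd_homog (l : ℕ) : FiniteDimensional ℂ (homogeneousSubmodule (Fin n) ℂ l) := by
  have hle : homogeneousSubmodule (Fin n) ℂ l ≤ restrictTotalDegree (Fin n) ℂ l := by
    intro p hp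
    rw [mem_restrictTotalDegree]
    exact IsHomogeneous.totalDegree_le hp
  exact Submodule.finiteDimensional_of_le hle

lemma pd_surj {s : ℕ} (Q : MvPolynomial (Fin n) ℂ) (hQne : Q ≠ 0)
    (hQhom : Q.IsHomogeneous s) (l : ℕ) (p : MvPolynomial (Fin n) ℂ)
    (hp : p.IsHomogeneous l) :
    ∃ r, r.IsHomogeneous (l + s) ∧ pd Q r = p := by
  classical
  set cQ := MvPolynomial.map (starRingEnd ℂ) Q with hcQ
  have hcQne : cQ ≠ 0 := by
    intro h
    apply hQne
    have := congrArg (MvPolynomial.map (starRingEnd ℂ)) h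
    rwa [conj_conj_poly, map_zero] at this
  have hcQhom : cQ.IsHomogeneous s := hQhom.map _
  set F : homogeneousSubmodule (Fin n) ℂ l →ₗ[ℂ] MvPolynomial (Fin n) ℂ :=
    (pd Q) ∘ₗ (LinearMap.mulLeft ℂ cQ) ∘ₗ (homogeneousSubmodule (Fin n) ℂ l).subtype with hF
  have hmem : ∀ q : homogeneousSubmodule (Fin n) ℂ l,
      F q ∈ homogeneousSubmodule (Fin n) ℂ l := by
    intro q
    have h1 : (cQ * q.val).IsHomogeneous (l + s) := by
      rw [add_comm]
      exact hcQhom.mul q.2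
    exact pd_isHomogeneous Q hQhom _ h1
  set S := F.codRestrict _ hmem with hS
  have hSinj : Function.Injective S := by
    rw [← LinearMap.ker_eq_bot]
    rw [eq_bot_iff]
    intro q hq
    have hq0 : pd Q (cQ * q.val) = 0 := congrArg Subtype.val (hq : S q = 0)
    have hr0 : cQ * q.val = 0 := by
      apply eq_zero_of_pd_conj_self
      have hconj : MvPolynomial.map (starRingEnd ℂ) (cQ * q.val)
          = MvPolynomial.map (starRingEnd ℂ) q.val * Q := by
        rw [map_mul, conj_conj_poly, mul_comm]
      rw [hconj, pd_mul, Module.End.mul_apply, hq0, map_zero]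
    have : q.val = 0 := by
      rcases mul_eq_zero.1 hr0 with h | h
      · exact absurd h hcQne
      · exact h
    simpa using Subtype.ext this
  have hSsurj : Function.Surjective S := LinearMap.injective_iff_surjective.1 hSinj
  obtain ⟨q, hq⟩ := hSsurj ⟨p, hp⟩
  refine ⟨cQ * q.val, by rw [add_comm]; exact hcQhom.mul q.2, ?_⟩
  exact congrArg Subtype.val hq

lemma QD_surj {s : ℕ} (Q : MvPolynomial (Fin n) ℂ) (hQne : Q ≠ 0)
    (hQhom : Q.IsHomogeneous s) (l : ℕ) (p : MvPolynomial (Fin n) ℂ)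
    (hp : p.IsHomogeneous l) :
    ∃ r, r.IsHomogeneous (l + s) ∧ QD Q r = p := by
  obtain ⟨r0, hr0, hpd⟩ := pd_surj Q hQne hQhom l p hp
  have hc : ((-Complex.I) ^ s) ≠ 0 :=
    pow_ne_zero _ (neg_ne_zero.2 Complex.I_ne_zero)
  refine ⟨((-Complex.I) ^ s)⁻¹ • r0,
    (homogeneousSubmodule (Fin n) ℂ (l + s)).smul_mem _ hr0, ?_⟩
  rw [QD_eq_smul_pd Q hQhom, LinearMap.smul_apply, map_smul, hpd, smul_smul,
    mul_inv_cancel₀ hc, one_smul]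

end Aux8

/-- If `Q ≠ 0` is homogeneous of degree `s` in `n ≥ 1` complex variables, then there is a
linear map `R : 𝒫 → 𝒫` that maps homogeneous polynomials of degree `l` to homogeneous
polynomials of degree `l + s` and is a right inverse of `Q(D)`. -/
theorem exists_homogeneity_preserving_right_inverse_of_QD {n : ℕ} (hn : 1 ≤ n) {s : ℕ}
    (Q : MvPolynomial (Fin n) ℂ) (hQne : Q ≠ 0) (hQhom : Q.IsHomogeneous s) :
    ∃ R : MvPolynomial (Fin n) ℂ →ₗ[ℂ] MvPolynomial (Fin n) ℂ,
      (∀ (l : ℕ) (p : MvPolynomial (Fin n) ℂ), p.IsHomogeneous l →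
        (R p).IsHomogeneous (l + s)) ∧
      ∀ p : MvPolynomial (Fin n) ℂ, QD Q (R p) = p := by
  classical
  have key := fun (β : Fin n →₀ ℕ) =>
    Aux8.QD_surj Q hQne hQhom β.degree (monomial β 1)
      (isHomogeneous_monomial 1 rfl)
  set g : (Fin n →₀ ℕ) → MvPolynomial (Fin n) ℂ := fun β => (key β).choose with hgdef
  have hg : ∀ β, (g β).IsHomogeneous (β.degree + s) ∧ QD Q (g β) = monomial β 1 :=
    fun β => (key β).choose_spec
  set B := basisMonomials (Fin n) ℂ with hB
  have hBcoe : ∀ β, B β = monomial β 1 := fun β => congrFun (coe_basisMonomials (Fin n) ℂ) β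
  refine ⟨B.constr ℂ g, ?_, ?_⟩
  · intro l p hp
    have hrp : (B.constr ℂ g) p = ∑ β ∈ p.support, p.coeff β • g β := by
      conv_lhs => rw [p.as_sum, map_sum]
      apply Finset.sum_congr rfl
      intro β _
      rw [show (monomial β) (p.coeff β) = p.coeff β • monomial β 1 by
          rw [smul_monomial, smul_eq_mul, mul_one],
        map_smul, ← hBcoe, Module.Basis.constr_basis]
    rw [hrp]
    apply IsHomogeneous.sum
    intro β hβ
    have hd : β.degree = l := by
      rw [Finsupp.degree_eq_weight_one]
      exact hp (mem_support_iff.1 hβ)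
    have h1 := (hg β).1
    rw [hd] at h1
    exact (homogeneousSubmodule (Fin n) ℂ (l + s)).smul_mem _ h1
  · intro p
    have hcomp : (QD Q) ∘ₗ (B.constr ℂ g) = LinearMap.id := by
      apply B.ext
      intro β
      rw [LinearMap.comp_apply, Module.Basis.constr_basis, (hg β).2, LinearMap.id_apply, hBcoe]
    have := LinearMap.congr_fun hcomp p
    simpa using this
end

section
/- Let T be a finite-dimensional, Hausdorff, σ-compact smooth manifold without boundary, let B₁ and B₂ be complex Banach spaces, and let P : T → L(B₁, B₂) be a C^∞ map into the space of bounded linear operators from B₁ to B₂ such that for every z ∈ T the operator P(z) is surjective and has finite-dimensional kernel (i.e., P(z) is a surjective Fredholm operator). Then the multiplication operator on smooth vector-valued functions is surjective: for every C^∞ function g : T → B₂ there exists a C^∞ function f : T → B₁ such that P(z) f(z) = g(z) for all z ∈ T. -/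
open scoped Manifold

/-- Let `T` be a finite-dimensional, Hausdorff, σ-compact smooth manifold without boundary,
`B₁`, `B₂` complex Banach spaces, and `P : T → L(B₁, B₂)` a `C^∞` family of bounded operators
such that every `P z` is a surjective Fredholm operator (surjective with finite-dimensional
kernel). Then for every smooth `g : T → B₂` there is a smooth `f : T → B₁` with
`P z (f z) = g z` for all `z`. -/
theorem smooth_surjective_fredholm_family_solvable
    {E : Type*} [NormedAddCommGroup E] [NormedSpace ℝ E] [FiniteDimensional ℝ E]
    {T : Type*} [TopologicalSpace T] [ChartedSpace E T]
    [IsManifold (modelWithCornersSelf ℝ E) (⊤ : ℕ∞) T]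
    [T2Space T] [SigmaCompactSpace T]
    {B₁ B₂ : Type*} [NormedAddCommGroup B₁] [NormedSpace ℂ B₁] [CompleteSpace B₁]
    [NormedAddCommGroup B₂] [NormedSpace ℂ B₂] [CompleteSpace B₂]
    (P : T → (B₁ →L[ℂ] B₂))
    (hP : ContMDiff (modelWithCornersSelf ℝ E)
      (modelWithCornersSelf ℝ (B₁ →L[ℂ] B₂)) (⊤ : ℕ∞) P)
    (hsurj : ∀ z : T, Function.Surjective (P z))
    (hker : ∀ z : T, FiniteDimensional ℂ (LinearMap.ker (P z : B₁ →ₗ[ℂ] B₂)))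
    (g : T → B₂)
    (hg : ContMDiff (modelWithCornersSelf ℝ E) (modelWithCornersSelf ℝ B₂) (⊤ : ℕ∞) g) :
    ∃ f : T → B₁,
      ContMDiff (modelWithCornersSelf ℝ E) (modelWithCornersSelf ℝ B₁) (⊤ : ℕ∞) f ∧
      ∀ z : T, P z (f z) = g z := by
    classical
  set I := modelWithCornersSelf ℝ E with hI
  -- the solution sets
  set t : T → Set B₁ := fun z => {v | P z v = g z} with ht_def
  have ht : ∀ z, Convex ℝ (t z) := by
    intro z
    have : t z = (((P z).restrictScalars ℝ : B₁ →ₗ[ℝ] B₂)) ⁻¹' {g z} := rfl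
    rw [this]
    exact (convex_singleton (g z)).linear_preimage _
  have Hloc : ∀ z₀ : T, ∃ U ∈ nhds z₀, ∃ f : T → B₁,
      ContMDiffOn I (modelWithCornersSelf ℝ B₁) (⊤ : ℕ∞) f U ∧ ∀ y ∈ U, f y ∈ t y := by
    intro z₀
    haveI := hker z₀
    haveI : CompleteSpace (LinearMap.ker (P z₀ : B₁ →ₗ[ℂ] B₂)) :=
      FiniteDimensional.complete ℂ (LinearMap.ker (P z₀ : B₁ →ₗ[ℂ] B₂))
    -- construct a continuous right inverse of `P z₀`
    obtain ⟨π, hπ⟩ :=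
      Submodule.ClosedComplemented.of_finiteDimensional (LinearMap.ker (P z₀ : B₁ →ₗ[ℂ] B₂))
    have hπrange : LinearMap.range (π : B₁ →ₗ[ℂ] LinearMap.ker (P z₀ : B₁ →ₗ[ℂ] B₂)) = ⊤ := by
      rw [LinearMap.range_eq_top]
      exact fun y => ⟨y, hπ y⟩
    have hcompl : IsCompl (LinearMap.ker (P z₀ : B₁ →ₗ[ℂ] B₂)) (LinearMap.ker (π : B₁ →ₗ[ℂ] LinearMap.ker (P z₀ : B₁ →ₗ[ℂ] B₂))) :=
      LinearMap.isCompl_of_proj hπ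
    have hPrange : LinearMap.range (P z₀ : B₁ →ₗ[ℂ] B₂) = ⊤ :=
      LinearMap.range_eq_top.2 (hsurj z₀)
    set e := ContinuousLinearMap.equivProdOfSurjectiveOfIsCompl (P z₀) π hPrange hπrange hcompl
      with he
    set Q : B₂ →L[ℂ] B₁ :=
      (e.symm : (B₂ × (LinearMap.ker (P z₀ : B₁ →ₗ[ℂ] B₂))) →L[ℂ] B₁).comp
        (ContinuousLinearMap.inl ℂ B₂ (LinearMap.ker (P z₀ : B₁ →ₗ[ℂ] B₂))) with hQdef
    have hQ : ∀ w : B₂, P z₀ (Q w) = w := by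
      intro w
      have h1 : e (e.symm (w, 0)) = (w, 0) := e.apply_symm_apply _
      have h2 : e (e.symm (w, 0)) = (P z₀ (e.symm (w, 0)), π (e.symm (w, 0))) :=
        ContinuousLinearMap.equivProdOfSurjectiveOfIsCompl_apply hPrange hπrange hcompl _
      have := h2.symm.trans h1
      exact (congrArg Prod.fst this)
    set Qr : B₂ →L[ℝ] B₁ := Q.restrictScalars ℝ with hQr
    set L : (B₁ →L[ℂ] B₂) →L[ℝ] (B₂ →L[ℝ] B₂) :=
      ((ContinuousLinearMap.compL ℝ B₂ B₁ B₂).flip Qr).comp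
        (ContinuousLinearMap.restrictScalarsL ℂ B₁ B₂ ℝ ℝ) with hL
    set A : T → (B₂ →L[ℝ] B₂) := fun z => L (P z) with hA_def
    have hAval : ∀ z w, A z w = P z (Q w) := fun z w => rfl
    have hA : ContMDiff I (modelWithCornersSelf ℝ (B₂ →L[ℝ] B₂)) (⊤ : ℕ∞) A :=
      L.contDiff.comp_contMDiff hP
    have hA₀ : A z₀ = 1 := by
      ext w
      rw [hAval, ContinuousLinearMap.one_apply, hQ]
    set U : Set T := A ⁻¹' {x | IsUnit x} with hU
    have hz₀U : U ∈ nhds z₀ := by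
      have hopen : IsOpen U := Units.isOpen.preimage hA.continuous
      refine hopen.mem_nhds ?_
      show IsUnit (A z₀)
      rw [hA₀]; exact isUnit_one
    refine ⟨U, hz₀U, fun z => Qr (Ring.inverse (A z) (g z)), ?_, ?_⟩
    · -- smoothness on U
      have hinv : ContMDiffOn I (modelWithCornersSelf ℝ (B₂ →L[ℝ] B₂)) (⊤ : ℕ∞)
          (fun z => Ring.inverse (A z)) U := by
        intro y hy
        have hy' : IsUnit (A y) := hy
        have hc : ContDiffAt ℝ ((⊤ : ℕ∞) : WithTop ℕ∞) Ring.inverse (A y) := by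
          have := contDiffAt_ringInverse ℝ (n := ((⊤ : ℕ∞) : WithTop ℕ∞)) hy'.unit
          rwa [hy'.unit_spec] at this
        have h2 : ContMDiffAt I (modelWithCornersSelf ℝ (B₂ →L[ℝ] B₂)) (⊤ : ℕ∞)
            (fun z => Ring.inverse (A z)) y := ContDiffAt.comp_contMDiffAt (g := Ring.inverse) hc (hA y)
        exact h2.contMDiffWithinAt
      have happ : ContMDiffOn I (modelWithCornersSelf ℝ B₂) (⊤ : ℕ∞)
          (fun z => Ring.inverse (A z) (g z)) U :=
        hinv.clm_apply hg.contMDiffOn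
      exact fun y hy => (Qr.contDiff.contDiffAt.comp_contMDiffWithinAt (happ y hy))
    · -- solves the equation on U
      intro y hy
      have hy' : IsUnit (A y) := hy
      show P y (Qr (Ring.inverse (A y) (g y))) = g y
      have h1 : P y (Qr (Ring.inverse (A y) (g y))) = A y (Ring.inverse (A y) (g y)) := rfl
      rw [h1, ← ContinuousLinearMap.mul_apply, Ring.mul_inverse_cancel _ hy',
        ContinuousLinearMap.one_apply]
  obtain ⟨f, hf⟩ := exists_contMDiffMap_forall_mem_convex_of_local I ht Hloc
  exact ⟨f, f.contMDiff, hf⟩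
end
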